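/- Let F have characteristic 0 and let n ≥ 1. For J ⊆ [n] define f_J = ∏_{j∈J} ( x_j · ∏_{j<i≤n}(x_j - x_i) ) in F[x_1,...,x_n], and let I_n = (e_1,...,e_n) be the coinvariant ideal. If 1 ∈ J then f_J ∈ I_n. -/

import Mathlib

open MvPolynomial

/-- `f_J = ∏_{j ∈ J} ( x_j · ∏_{j < i ≤ n} (x_j - x_i) )`. -/
noncomputable def fJ (n : ℕ) (F : Type*) [Field F] (J : Finset (Fin n)) :
    MvPolynomial (Fin n) F :=
  ∏ j ∈ J, (MvPolynomial.X j *
    ∏ i ∈ Finset.univ.filter (fun i : Fin n => j < i),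
      (MvPolynomial.X j - MvPolynomial.X i))

/-- If `1 ∈ J` then `f_J` lies in the coinvariant ideal `I_n = (e_1,…,e_n)`. -/
theorem fJ_mem_coinvariant_ideal (F : Type*) [Field F] [CharZero F]
    (n : ℕ) (hn : 0 < n) (J : Finset (Fin n))
    (h1 : (⟨0, hn⟩ : Fin n) ∈ J) :
    fJ n F J ∈ Ideal.span (Set.range fun k : Fin n =>
      MvPolynomial.esymm (Fin n) F ((k : ℕ) + 1)) := by
  classical
  set z : Fin n := ⟨0, hn⟩ with hz
  set I : Ideal (MvPolynomial (Fin n) F) :=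
    Ideal.span (Set.range fun k : Fin n =>
      MvPolynomial.esymm (Fin n) F ((k : ℕ) + 1)) with hI
  -- each esymm m with 1 ≤ m ≤ n lies in I
  have hesymm : ∀ m : ℕ, 0 < m → m ≤ n → MvPolynomial.esymm (Fin n) F m ∈ I := by
    intro m hm hmn
    have hmlt : m - 1 < n := by omega
    have : m = ((⟨m - 1, hmlt⟩ : Fin n) : ℕ) + 1 := by simp; omega
    rw [this]
    exact Ideal.subset_span ⟨⟨m - 1, hmlt⟩, rfl⟩
  set P : Polynomial (MvPolynomial (Fin n) F) :=
    ∏ i : Fin n, (Polynomial.X - Polynomial.C (MvPolynomial.X i)) with hP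
  have hmonic : P.Monic :=
    Polynomial.monic_prod_of_monic _ _ fun i _ => Polynomial.monic_X_sub_C _
  have hdeg : P.natDegree = n := by
    rw [hP, Polynomial.natDegree_prod_of_monic _ _ fun i _ => Polynomial.monic_X_sub_C _]
    simp
  -- coefficients of P below top lie in I
  have hcoeff : ∀ m, m < n → P.coeff m ∈ I := by
    intro m hm
    have hcard : Multiset.card (Finset.univ.val.map
        (MvPolynomial.X : Fin n → MvPolynomial (Fin n) F)) = n := by simp
    have hkey := Multiset.prod_X_sub_C_coeff (Finset.univ.val.map
        (MvPolynomial.X : Fin n → MvPolynomial (Fin n) F)) (k := m)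
        (by rw [hcard]; omega)
    have hPP : P = ((Finset.univ.val.map
        (MvPolynomial.X : Fin n → MvPolynomial (Fin n) F)).map
        (fun t => Polynomial.X - Polynomial.C t)).prod := by
      rw [hP, Finset.prod_eq_multiset_prod, Multiset.map_map]
      rfl
    rw [hPP, hkey, hcard]
    have he : (Finset.univ.val.map
        (MvPolynomial.X : Fin n → MvPolynomial (Fin n) F)).esymm (n - m)
        = MvPolynomial.esymm (Fin n) F (n - m) := by
      rw [MvPolynomial.esymm_eq_multiset_esymm]
    rw [he]
    exact Ideal.mul_mem_left _ _ (hesymm (n - m) (by omega) (by omega))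
  have hctop : P.coeff n = 1 := by
    have := hmonic
    rwa [Polynomial.Monic, Polynomial.leadingCoeff, hdeg] at this
  -- X z ^ n ∈ I
  have hX0 : (MvPolynomial.X z : MvPolynomial (Fin n) F) ^ n ∈ I := by
    have heval : Polynomial.eval (MvPolynomial.X z) P = 0 := by
      rw [hP, Polynomial.eval_prod]
      exact Finset.prod_eq_zero (Finset.mem_univ z) (by simp)
    rw [Polynomial.eval_eq_sum_range' (n := n + 1) (by omega : P.natDegree < n + 1),
      Finset.sum_range_succ, hctop, one_mul] at heval
    have hXn : (MvPolynomial.X z : MvPolynomial (Fin n) F) ^ n =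
        -∑ k ∈ Finset.range n, P.coeff k * (MvPolynomial.X z) ^ k := by
      linear_combination heval
    rw [hXn]
    exact neg_mem (Ideal.sum_mem _ fun k hk =>
      Ideal.mul_mem_right _ _ (hcoeff k (Finset.mem_range.mp hk)))
  -- eval of derivative
  have hfilter : Finset.univ.filter (fun i : Fin n => z < i) = Finset.univ.erase z := by
    ext i
    simp only [Finset.mem_filter, Finset.mem_univ, Finset.mem_erase, true_and, and_true,
      Fin.lt_def, Ne, Fin.ext_iff, hz]
    omega
  have hderiv : Polynomial.eval (MvPolynomial.X z) (Polynomial.derivative P) =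
      ∏ i ∈ Finset.univ.filter (fun i : Fin n => z < i),
        (MvPolynomial.X z - MvPolynomial.X i) := by
    rw [hfilter]
    have hmem : MvPolynomial.X z ∈ Finset.univ.val.map
        (MvPolynomial.X : Fin n → MvPolynomial (Fin n) F) :=
      Multiset.mem_map.mpr ⟨z, by simp, rfl⟩
    have hPP : P = (Multiset.map (fun a => Polynomial.X - Polynomial.C a)
        (Finset.univ.val.map (MvPolynomial.X : Fin n → MvPolynomial (Fin n) F))).prod := by
      rw [hP, Finset.prod_eq_multiset_prod, Multiset.map_map]
      rfl
    rw [hPP, Polynomial.eval_multiset_prod_X_sub_C_derivative hmem]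
    have herase : (Finset.univ.val.map
        (MvPolynomial.X : Fin n → MvPolynomial (Fin n) F)).erase (MvPolynomial.X z)
        = (Finset.univ.erase z).val.map (MvPolynomial.X : Fin n → MvPolynomial (Fin n) F) := by
      rw [Finset.erase_val, Multiset.map_erase _ MvPolynomial.X_injective]
    rw [herase, Multiset.map_map, Finset.prod_eq_multiset_prod]
    rfl
  -- the key factor lies in I
  have hg : MvPolynomial.X z *
      ∏ i ∈ Finset.univ.filter (fun i : Fin n => z < i),
        (MvPolynomial.X z - MvPolynomial.X i) ∈ I := by
    rw [← hderiv]
    have hd2 : (Polynomial.derivative P).natDegree < n := by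
      have := Polynomial.natDegree_derivative_le P
      omega
    rw [Polynomial.eval_eq_sum_range' hd2, Finset.mul_sum]
    apply Ideal.sum_mem
    intro k hk
    rw [Polynomial.coeff_derivative]
    rcases lt_or_eq_of_le (Nat.succ_le_of_lt (Finset.mem_range.mp hk)) with h | h
    · exact Ideal.mul_mem_left _ _ (Ideal.mul_mem_right _ _
        (Ideal.mul_mem_right _ _ (hcoeff (k + 1) h)))
    · have h' : k + 1 = n := h
      have hck : P.coeff (k + 1) = 1 := by rw [h', hctop]
      have hpow : (MvPolynomial.X z : MvPolynomial (Fin n) F) ^ n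
          = MvPolynomial.X z ^ k * MvPolynomial.X z :=
        (congrArg (fun m => (MvPolynomial.X z : MvPolynomial (Fin n) F) ^ m) h'.symm).trans
          (pow_succ _ _)
      have heq : MvPolynomial.X z * (P.coeff (k + 1) * ((k : MvPolynomial (Fin n) F) + 1) *
          MvPolynomial.X z ^ k) =
          ((k : MvPolynomial (Fin n) F) + 1) * MvPolynomial.X z ^ n := by
        rw [hck, hpow]
        ring
      rw [heq]
      exact Ideal.mul_mem_left _ _ hX0
  rw [fJ, ← Finset.mul_prod_erase J _ h1]
  exact Ideal.mul_mem_right _ _ hg
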